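/- arXiv:2602.01148 — 2 statements merged into one kernel-verified Lean document; each statement's English description precedes it below -/
import Mathlib

section
/- Fix an integer B ≥ 2 and a real constant c > 0. There exist a constant C > 0 and a threshold κ₀ > (B−1)c such that for all κ ≥ κ₀, the Kullback–Leibler divergence from the uniform distribution u on Fin B to the concentrated distribution p̄(κ) satisfies |D(u‖p̄(κ)) − ( ((B−1)/B)·log κ − log B − ((B−1)/B)·log c )| ≤ C/κ. -/
open Real

/-- The concentrated distribution on `Fin B`: mass `1 - (B-1)c/κ` on index `0`
and `c/κ` on each other index. -/
noncomputable def concentratedDist (B : ℕ) (c κ : ℝ) : Fin B → ℝ :=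
  fun i => if i.val = 0 then 1 - (B - 1) * c / κ else c / κ

/-- Kullback–Leibler divergence between probability vectors on `Fin B`
(natural logarithm). -/
noncomputable def klDiv {B : ℕ} (q p : Fin B → ℝ) : ℝ :=
  ∑ i, q i * Real.log (q i / p i)

/-- The uniform distribution on `Fin B`. -/
noncomputable def uniformDist (B : ℕ) : Fin B → ℝ := fun _ => 1 / B

lemma sum_ite_fin {B : ℕ} (hB : 1 ≤ B) (A C : ℝ) :
    (∑ i : Fin B, if (i : Fin B).val = 0 then A else C) = A + ((B : ℝ) - 1) * C := by
  obtain ⟨n, rfl⟩ : ∃ n, B = n + 1 := ⟨B - 1, by omega⟩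
  rw [Fin.sum_univ_succ]
  simp [Fin.val_succ, Finset.sum_const]


/-- asymptotic expansion of the KL divergence from the uniform
distribution to the concentrated distribution, with `O(1/κ)` error. -/
theorem klDiv_uniform_concentrated_asymptotic (B : ℕ) (hB : 2 ≤ B) (c : ℝ) (hc : 0 < c) :
    ∃ C > 0, ∃ κ₀ > (B - 1 : ℝ) * c, ∀ κ ≥ κ₀,
      |klDiv (uniformDist B) (concentratedDist B c κ) -
        (((B - 1 : ℝ) / B) * Real.log κ - Real.log B - ((B - 1 : ℝ) / B) * Real.log c)|
        ≤ C / κ := by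
  have hB2 : (2 : ℝ) ≤ (B : ℝ) := by exact_mod_cast hB
  have hB0 : (0 : ℝ) < (B : ℝ) := by linarith
  have hd0 : 0 < ((B : ℝ) - 1) * c := by nlinarith
  refine ⟨2 * (((B : ℝ) - 1) * c), by linarith, 2 * (((B : ℝ) - 1) * c), by linarith, ?_⟩
  intro κ hκ
  have hκ0 : 0 < κ := by linarith
  set x : ℝ := ((B : ℝ) - 1) * c / κ with hxdef
  have hx0 : 0 < x := div_pos hd0 hκ0
  have hxhalf : x ≤ 1 / 2 := by
    rw [hxdef, div_le_iff₀ hκ0]; linarith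
  set a : ℝ := 1 - x with hadef
  have ha0 : 0 < a := by rw [hadef]; linarith
  have hahalf : 1 / 2 ≤ a := by rw [hadef]; linarith
  have ha1 : a ≤ 1 := by rw [hadef]; linarith
  -- compute the sum
  have hsum : klDiv (uniformDist B) (concentratedDist B c κ)
      = (1 / B) * Real.log ((1 / B) / a)
        + ((B : ℝ) - 1) * ((1 / B) * Real.log ((1 / B) / (c / κ))) := by
    unfold klDiv uniformDist concentratedDist
    have : (∑ i : Fin B, (1 / (B : ℝ)) * Real.log ((1 / (B : ℝ)) /
        (if (i : Fin B).val = 0 then 1 - ((B : ℝ) - 1) * c / κ else c / κ)))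
        = ∑ i : Fin B, (if (i : Fin B).val = 0 then
            (1 / (B : ℝ)) * Real.log ((1 / B) / a)
          else (1 / (B : ℝ)) * Real.log ((1 / B) / (c / κ))) := by
      refine Finset.sum_congr rfl fun i _ => ?_
      split_ifs with h <;> rfl
    rw [this, sum_ite_fin (by omega)]
  have hlogB : Real.log (1 / (B : ℝ)) = -Real.log B := by
    rw [one_div, Real.log_inv]
  have la : Real.log ((1 / (B : ℝ)) / a) = -Real.log B - Real.log a := by
    rw [Real.log_div (by positivity) ha0.ne', hlogB]
  have lb : Real.log ((1 / (B : ℝ)) / (c / κ))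
      = -Real.log B - (Real.log c - Real.log κ) := by
    rw [Real.log_div (by positivity) (by positivity), hlogB,
      Real.log_div hc.ne' hκ0.ne']
  have hdiff : klDiv (uniformDist B) (concentratedDist B c κ) -
      (((B - 1 : ℝ) / B) * Real.log κ - Real.log B - ((B - 1 : ℝ) / B) * Real.log c)
      = -(1 / B) * Real.log a := by
    rw [hsum, la, lb]
    field_simp
    ring
  rw [hdiff]
  -- bound -log a
  have hloga0 : Real.log a ≤ 0 := Real.log_nonpos ha0.le ha1
  have hinv : a⁻¹ ≤ 2 := by
    rw [inv_le_comm₀ (by linarith) (by norm_num)]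
    linarith
  have hlog : -Real.log a ≤ 2 * x := by
    have h1 : Real.log a⁻¹ ≤ a⁻¹ - 1 := Real.log_le_sub_one_of_pos (by positivity)
    rw [Real.log_inv] at h1
    have h2 : a⁻¹ - 1 = x / a := by
      field_simp [hadef]
      linarith
    have h3 : x / a ≤ 2 * x := by
      rw [div_le_iff₀ ha0]
      nlinarith
    linarith
  have habs : |(-(1 / (B : ℝ)) * Real.log a)| = (1 / B) * (-Real.log a) := by
    rw [abs_mul, abs_neg, abs_of_nonneg (by positivity : (0:ℝ) ≤ 1 / (B:ℝ)),
      abs_of_nonpos hloga0]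
  rw [habs]
  have hBinv : 1 / (B : ℝ) ≤ 1 := by
    rw [div_le_one hB0]; linarith
  have : (1 / (B : ℝ)) * (-Real.log a) ≤ 2 * x := by
    nlinarith
  calc (1 / (B : ℝ)) * (-Real.log a) ≤ 2 * x := this
    _ = 2 * (((B : ℝ) - 1) * c) / κ := by rw [hxdef]; ring
end

section
/- Let (Ω, 𝓕, μ) be a probability space, d ≥ 1 and M ≥ 1 natural numbers, E = EuclideanSpace ℝ (Fin d), and f : E → E a Lipschitz map with constant L ≥ 0. Let ε_1, …, ε_M : Ω → E be an independent family of measurable, square-integrable random vectors, each with mean zero (∫ ε_k dμ = 0) and common second moment ∫ ‖ε_k‖² dμ = d·σ_h² for some σ_h ≥ 0. Define the clean orbit h*_0 ∈ E, h*_k = f(h*_{k−1}), and the noisy orbit h_0 = h*_0 (constant), h_k(ω) = f(h_{k−1}(ω)) + ε_k(ω). Then the expected squared final-state error satisfies ∫ ‖h_M − h*_M‖² dμ ≤ d·σ_h² · ∑_{i=0}^{M−1} L^{2i}; in particular, when L ≠ 1 the right-hand side equals ((1 − L^{2M})/(1 − L²))·d·σ_h², and when L = 1 it equals M·d·σ_h².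 -/
open MeasureTheory ProbabilityTheory Finset
open scoped RealInnerProductSpace

/-- The noisy latent orbit: `h 0 = h0` and `h (k+1) ω = f (h k ω) + ε (k+1) ω`. -/
noncomputable def noisyOrbit {d : ℕ} {Ω : Type*}
    (f : EuclideanSpace ℝ (Fin d) → EuclideanSpace ℝ (Fin d))
    (h0 : EuclideanSpace ℝ (Fin d)) (ε : ℕ → Ω → EuclideanSpace ℝ (Fin d)) :
    ℕ → Ω → EuclideanSpace ℝ (Fin d)
  | 0 => fun _ => h0
  | (k + 1) => fun ω => f (noisyOrbit f h0 ε k ω) + ε (k + 1) ω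

/-- The orbit at time `k` as a function of a vector of noises. -/
noncomputable def orbitAux {d : ℕ}
    (f : EuclideanSpace ℝ (Fin d) → EuclideanSpace ℝ (Fin d))
    (h0 : EuclideanSpace ℝ (Fin d)) (M : ℕ) :
    ℕ → (Fin M → EuclideanSpace ℝ (Fin d)) → EuclideanSpace ℝ (Fin d)
  | 0 => fun _ => h0
  | (k + 1) => fun v => f (orbitAux f h0 M k v) + (if h : k < M then v ⟨k, h⟩ else 0)

lemma orbitAux_congr {d : ℕ}
    (f : EuclideanSpace ℝ (Fin d) → EuclideanSpace ℝ (Fin d))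
    (h0 : EuclideanSpace ℝ (Fin d)) (M : ℕ) (k : ℕ)
    (v w : Fin M → EuclideanSpace ℝ (Fin d))
    (h : ∀ i : Fin M, i.1 < k → v i = w i) :
    orbitAux f h0 M k v = orbitAux f h0 M k w := by
  induction k with
  | zero => rfl
  | succ k ih =>
    have h1 := ih (fun i hi => h i (Nat.lt_succ_of_lt hi))
    simp only [orbitAux, h1]
    congr 1
    split
    · next hk => exact h ⟨k, hk⟩ (Nat.lt_succ_self k)
    · rfl

lemma orbitAux_measurable {d : ℕ}
    {f : EuclideanSpace ℝ (Fin d) → EuclideanSpace ℝ (Fin d)}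
    (hf : Continuous f)
    (h0 : EuclideanSpace ℝ (Fin d)) (M : ℕ) (k : ℕ) :
    Measurable (orbitAux f h0 M k) := by
  induction k with
  | zero => exact measurable_const
  | succ k ih =>
    refine (hf.measurable.comp ih).add ?_
    split
    · exact measurable_pi_apply _
    · exact measurable_const

lemma orbitAux_spec {d : ℕ} {Ω : Type*}
    (f : EuclideanSpace ℝ (Fin d) → EuclideanSpace ℝ (Fin d))
    (h0 : EuclideanSpace ℝ (Fin d)) (M : ℕ)
    (ε : ℕ → Ω → EuclideanSpace ℝ (Fin d)) (k : ℕ) (hk : k ≤ M) (ω : Ω) :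
    noisyOrbit f h0 ε k ω = orbitAux f h0 M k (fun i => ε (i.1 + 1) ω) := by
  induction k with
  | zero => rfl
  | succ k ih =>
    have hk' : k < M := hk
    simp only [noisyOrbit, orbitAux, ih (le_of_lt hk'), dif_pos hk']

/-- Cross term: if `X` and `Y` are independent square-integrable and `Y` has mean zero,
then `E⟪X, Y⟫ = 0`, and the inner product is integrable. -/
lemma inner_indep_integral_zero {d : ℕ} {Ω : Type*} [MeasurableSpace Ω]
    (μ : Measure Ω) [IsProbabilityMeasure μ]
    (X Y : Ω → EuclideanSpace ℝ (Fin d))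
    (hX : MemLp X 2 μ) (hY : MemLp Y 2 μ)
    (hind : IndepFun X Y μ) (hYmean : ∫ ω, Y ω ∂μ = 0) :
    Integrable (fun ω => ⟪X ω, Y ω⟫) μ ∧ ∫ ω, ⟪X ω, Y ω⟫ ∂μ = 0 := by
  have hXj : ∀ j : Fin d, MemLp (fun ω => X ω j) 2 μ := fun j => by
    simpa [Function.comp_def] using (EuclideanSpace.proj j (𝕜 := ℝ)).comp_memLp' hX
  have hYj : ∀ j : Fin d, MemLp (fun ω => Y ω j) 2 μ := fun j => by
    simpa [Function.comp_def] using (EuclideanSpace.proj j (𝕜 := ℝ)).comp_memLp' hY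
  have hmeasproj : ∀ j : Fin d,
      Measurable (fun x : EuclideanSpace ℝ (Fin d) => x j) := fun j =>
    (EuclideanSpace.proj j (𝕜 := ℝ)).continuous.measurable
  have hindj : ∀ j : Fin d, IndepFun (fun ω => X ω j) (fun ω => Y ω j) μ := fun j =>
    hind.comp (hmeasproj j) (hmeasproj j)
  have hint : ∀ j : Fin d, Integrable (fun ω => X ω j * Y ω j) μ := fun j =>
    (hindj j).integrable_mul ((hXj j).integrable one_le_two) ((hYj j).integrable one_le_two)
  have hsum : ∀ ω, ⟪X ω, Y ω⟫ = ∑ j, X ω j * Y ω j := fun ω => by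
    simp [PiLp.inner_apply, RCLike.inner_apply, conj_trivial]
    exact Finset.sum_congr rfl (fun _ _ => mul_comm _ _)
  have hYj0 : ∀ j : Fin d, ∫ ω, Y ω j ∂μ = 0 := by
    intro j
    have := (EuclideanSpace.proj j (𝕜 := ℝ)).integral_comp_comm (hY.integrable one_le_two)
    simpa [hYmean] using this
  constructor
  · exact (integrable_finset_sum _ fun j _ => hint j).congr
      (Filter.Eventually.of_forall fun ω => (hsum ω).symm)
  · calc ∫ ω, ⟪X ω, Y ω⟫ ∂μ = ∫ ω, ∑ j, X ω j * Y ω j ∂μ := by simp_rw [hsum]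
      _ = ∑ j, ∫ ω, X ω j * Y ω j ∂μ := integral_finset_sum _ fun j _ => hint j
      _ = 0 := by
          refine Finset.sum_eq_zero fun j _ => ?_
          have h := (hindj j).integral_fun_mul_eq_mul_integral ((hXj j).aestronglyMeasurable)
            ((hYj j).aestronglyMeasurable)
          rw [hYj0 j, mul_zero] at h
          exact h

/-- Compounding error in latent computation: the expected squared
final-state error of the noisy orbit relative to the clean orbit `f^[M] h0` is at most
`d·σ_h² · ∑_{i<M} L^{2i}`, which equals `((1−L^{2M})/(1−L²))·d·σ_h²` when `L ≠ 1` and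
`M·d·σ_h²` when `L = 1`. -/
theorem latent_compounding_error
    {Ω : Type*} [MeasurableSpace Ω] (μ : Measure Ω) [IsProbabilityMeasure μ]
    (d M : ℕ) (hd : 1 ≤ d) (hM : 1 ≤ M)
    (f : EuclideanSpace ℝ (Fin d) → EuclideanSpace ℝ (Fin d))
    (L : ℝ) (hL : 0 ≤ L)
    (hf : ∀ x y, ‖f x - f y‖ ≤ L * ‖x - y‖)
    (ε : ℕ → Ω → EuclideanSpace ℝ (Fin d))
    (σh : ℝ) (hσh : 0 ≤ σh)
    (hmeas : ∀ k, 1 ≤ k → k ≤ M → Measurable (ε k))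
    (hL2 : ∀ k, 1 ≤ k → k ≤ M → MemLp (ε k) 2 μ)
    (hmean : ∀ k, 1 ≤ k → k ≤ M → ∫ ω, ε k ω ∂μ = 0)
    (hvar : ∀ k, 1 ≤ k → k ≤ M → ∫ ω, ‖ε k ω‖ ^ 2 ∂μ = d * σh ^ 2)
    (hindep : iIndepFun (fun k : Fin M => ε (k.1 + 1)) μ)
    (h0 : EuclideanSpace ℝ (Fin d)) :
    (∫ ω, ‖noisyOrbit f h0 ε M ω - f^[M] h0‖ ^ 2 ∂μ
        ≤ d * σh ^ 2 * ∑ i ∈ Finset.range M, L ^ (2 * i)) ∧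
    (L ≠ 1 → d * σh ^ 2 * ∑ i ∈ Finset.range M, L ^ (2 * i)
        = (1 - L ^ (2 * M)) / (1 - L ^ 2) * (d * σh ^ 2)) ∧
    (L = 1 → d * σh ^ 2 * ∑ i ∈ Finset.range M, L ^ (2 * i) = M * (d * σh ^ 2)) := by
  have hcont : Continuous f := by
    have : LipschitzWith ⟨L, hL⟩ f :=
      LipschitzWith.of_dist_le_mul (fun x y => by rw [dist_eq_norm, dist_eq_norm]; exact hf x y)
    exact this.continuous
  -- composing a MemLp function with f stays in L²
  have hfmem : ∀ g : Ω → EuclideanSpace ℝ (Fin d), Measurable g → MemLp g 2 μ →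
      MemLp (fun ω => f (g ω)) 2 μ := by
    intro g hgm hgp
    have hdom : MemLp (fun ω => L * ‖g ω - h0‖ + ‖f h0‖) 2 μ :=
      (((hgp.sub (memLp_const h0)).norm.const_mul L)).add (memLp_const _)
    refine hdom.of_le ((hcont.measurable.comp hgm)).aestronglyMeasurable
      (Filter.Eventually.of_forall fun ω => ?_)
    have h1 : ‖f (g ω)‖ ≤ L * ‖g ω - h0‖ + ‖f h0‖ := by
      calc ‖f (g ω)‖ = ‖f (g ω) - f h0 + f h0‖ := by rw [sub_add_cancel]
        _ ≤ ‖f (g ω) - f h0‖ + ‖f h0‖ := norm_add_le _ _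
        _ ≤ L * ‖g ω - h0‖ + ‖f h0‖ := by
            have := hf (g ω) h0; linarith
    have h2 : 0 ≤ L * ‖g ω - h0‖ + ‖f h0‖ :=
      add_nonneg (mul_nonneg hL (norm_nonneg _)) (norm_nonneg _)
    simpa [Real.norm_eq_abs, abs_of_nonneg h2] using h1
  -- measurability and square integrability of the noisy orbit
  have hstep : ∀ k, k ≤ M →
      Measurable (noisyOrbit f h0 ε k) ∧ MemLp (noisyOrbit f h0 ε k) 2 μ := by
    intro k
    induction k with
    | zero => exact fun _ => ⟨measurable_const, memLp_const _⟩
    | succ k ih =>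
      intro hk
      obtain ⟨hm, hp⟩ := ih (Nat.le_of_succ_le hk)
      constructor
      · exact (hcont.measurable.comp hm).add (hmeas (k + 1) (by omega) hk)
      · exact (hfmem _ hm hp).add (hL2 (k + 1) (by omega) hk)
  -- independence of the orbit from the next noise
  have hindepk : ∀ k, k < M → IndepFun (noisyOrbit f h0 ε k) (ε (k + 1)) μ := by
    intro k hk
    set S : Finset (Fin M) := Finset.univ.filter (fun i => i.1 < k) with hS
    set T : Finset (Fin M) := {⟨k, hk⟩} with hT
    have hST : Disjoint S T := by
      rw [Finset.disjoint_singleton_right]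
      simp [hS]
    have hmeas' : ∀ i : Fin M, Measurable (ε (i.1 + 1)) := fun i =>
      hmeas _ (by omega) (by omega)
    have h1 := hindep.indepFun_finset S T hST hmeas'
    let φ : ((i : S) → EuclideanSpace ℝ (Fin d)) → EuclideanSpace ℝ (Fin d) :=
      fun w => orbitAux f h0 M k (fun i => if h : i ∈ S then w ⟨i, h⟩ else 0)
    let ψ : ((i : T) → EuclideanSpace ℝ (Fin d)) → EuclideanSpace ℝ (Fin d) :=
      fun w => w ⟨⟨k, hk⟩, Finset.mem_singleton_self _⟩
    have hφ : Measurable φ := by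
      refine (orbitAux_measurable hcont h0 M k).comp ?_
      refine measurable_pi_lambda _ (fun i => ?_)
      by_cases h : i ∈ S
      · simp only [dif_pos h]; exact measurable_pi_apply _
      · simp only [dif_neg h]; exact measurable_const
    have hψ : Measurable ψ := measurable_pi_apply _
    have h2 := h1.comp hφ hψ
    have hφeq : (φ ∘ fun a (i : S) => ε (i.1 + 1) a) = noisyOrbit f h0 ε k := by
      funext ω
      show orbitAux f h0 M k
        (fun i => if h : i ∈ S then ε (i.1 + 1) ω else 0) = noisyOrbit f h0 ε k ω
      rw [orbitAux_spec f h0 M ε k (le_of_lt hk) ω]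
      refine orbitAux_congr f h0 M k _ _ (fun i hi => ?_)
      rw [dif_pos (by simp [hS, hi])]
    have hψeq : (ψ ∘ fun a (i : T) => ε (i.1 + 1) a) = ε (k + 1) := rfl
    rwa [hφeq, hψeq] at h2
  -- main induction
  have key : ∀ k, k ≤ M →
      ∫ ω, ‖noisyOrbit f h0 ε k ω - f^[k] h0‖ ^ 2 ∂μ
        ≤ d * σh ^ 2 * ∑ i ∈ Finset.range k, L ^ (2 * i) := by
    intro k
    induction k with
    | zero => intro _; simp [noisyOrbit]
    | succ k ih =>
      intro hk
      have hk' : k < M := hk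
      obtain ⟨hm, hp⟩ := hstep k (le_of_lt hk')
      set a : Ω → EuclideanSpace ℝ (Fin d) :=
        fun ω => f (noisyOrbit f h0 ε k ω) - f^[k + 1] h0 with ha
      set b : Ω → EuclideanSpace ℝ (Fin d) := ε (k + 1) with hb
      have hbmem : MemLp b 2 μ := hL2 _ (by omega) hk
      have hamem : MemLp a 2 μ := (hfmem _ hm hp).sub (memLp_const _)
      have hind_ab : IndepFun a b μ := by
        have := (hindepk k hk').comp
          (φ := fun x => f x - f^[k + 1] h0) (ψ := id)
          ((hcont.sub continuous_const).measurable) measurable_id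
        exact this
      have hcross := inner_indep_integral_zero μ a b hamem hbmem hind_ab
        (hmean (k + 1) (by omega) hk)
      have heq : ∀ ω, noisyOrbit f h0 ε (k + 1) ω - f^[k + 1] h0 = a ω + b ω := by
        intro ω
        show (f (noisyOrbit f h0 ε k ω) + ε (k + 1) ω) - f^[k + 1] h0 = _
        rw [ha, hb]
        exact add_sub_right_comm _ _ _
      have ha2int : Integrable (fun ω => ‖a ω‖ ^ 2) μ := hamem.norm.integrable_sq
      have hb2int : Integrable (fun ω => ‖b ω‖ ^ 2) μ := hbmem.norm.integrable_sq
      have hg2int : Integrable (fun ω => ‖noisyOrbit f h0 ε k ω - f^[k] h0‖ ^ 2) μ :=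
        (hp.sub (memLp_const _)).norm.integrable_sq
      have hsplit : ∫ ω, ‖noisyOrbit f h0 ε (k + 1) ω - f^[k + 1] h0‖ ^ 2 ∂μ
          = ∫ ω, ‖a ω‖ ^ 2 ∂μ + d * σh ^ 2 := by
        have hptw : ∀ ω, ‖noisyOrbit f h0 ε (k + 1) ω - f^[k + 1] h0‖ ^ 2
            = ‖a ω‖ ^ 2 + 2 * ⟪a ω, b ω⟫ + ‖b ω‖ ^ 2 := fun ω => by
          rw [heq ω, norm_add_sq_real]
        calc ∫ ω, ‖noisyOrbit f h0 ε (k + 1) ω - f^[k + 1] h0‖ ^ 2 ∂μ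
            = ∫ ω, (‖a ω‖ ^ 2 + 2 * ⟪a ω, b ω⟫ + ‖b ω‖ ^ 2) ∂μ := by simp_rw [hptw]
          _ = (∫ ω, (‖a ω‖ ^ 2 + 2 * ⟪a ω, b ω⟫) ∂μ) + ∫ ω, ‖b ω‖ ^ 2 ∂μ :=
              integral_add (ha2int.add (hcross.1.const_mul 2)) hb2int
          _ = (∫ ω, ‖a ω‖ ^ 2 ∂μ) + (∫ ω, 2 * ⟪a ω, b ω⟫ ∂μ) + ∫ ω, ‖b ω‖ ^ 2 ∂μ := by
              rw [integral_add ha2int (hcross.1.const_mul 2)]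
          _ = ∫ ω, ‖a ω‖ ^ 2 ∂μ + d * σh ^ 2 := by
              rw [integral_const_mul, hcross.2, hvar (k + 1) (by omega) hk]
              ring
      have hcontract : ∫ ω, ‖a ω‖ ^ 2 ∂μ
          ≤ L ^ 2 * ∫ ω, ‖noisyOrbit f h0 ε k ω - f^[k] h0‖ ^ 2 ∂μ := by
        rw [← integral_const_mul]
        refine integral_mono ha2int (hg2int.const_mul _) (fun ω => ?_)
        have h1 : ‖a ω‖ ≤ L * ‖noisyOrbit f h0 ε k ω - f^[k] h0‖ := by
          rw [ha]
          simp only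
          rw [Function.iterate_succ_apply']
          exact hf _ _
        calc ‖a ω‖ ^ 2 ≤ (L * ‖noisyOrbit f h0 ε k ω - f^[k] h0‖) ^ 2 :=
              pow_le_pow_left₀ (norm_nonneg _) h1 2
          _ = L ^ 2 * ‖noisyOrbit f h0 ε k ω - f^[k] h0‖ ^ 2 := by ring
      have hgeo : ∑ i ∈ Finset.range (k + 1), L ^ (2 * i)
          = L ^ 2 * ∑ i ∈ Finset.range k, L ^ (2 * i) + 1 := by
        simp_rw [pow_mul]
        exact geom_sum_succ
      have hdσ : (0 : ℝ) ≤ d * σh ^ 2 := mul_nonneg (by positivity) (sq_nonneg _)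
      have hih := ih (le_of_lt hk')
      calc ∫ ω, ‖noisyOrbit f h0 ε (k + 1) ω - f^[k + 1] h0‖ ^ 2 ∂μ
          = ∫ ω, ‖a ω‖ ^ 2 ∂μ + d * σh ^ 2 := hsplit
        _ ≤ L ^ 2 * (d * σh ^ 2 * ∑ i ∈ Finset.range k, L ^ (2 * i)) + d * σh ^ 2 := by
            have := hcontract.trans (mul_le_mul_of_nonneg_left hih (sq_nonneg L))
            linarith
        _ = d * σh ^ 2 * ∑ i ∈ Finset.range (k + 1), L ^ (2 * i) := by
            rw [hgeo]; ring
  refine ⟨key M le_rfl, ?_, ?_⟩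
  · intro hL1
    have hne : L ^ 2 ≠ 1 := by
      intro h
      have h1 : (L - 1) * (L + 1) = 0 := by nlinarith
      rcases mul_eq_zero.mp h1 with h2 | h2
      · exact hL1 (by linarith)
      · linarith
    have h2 : L ^ 2 - 1 ≠ 0 := sub_ne_zero.mpr hne
    have h3 : (1 : ℝ) - L ^ 2 ≠ 0 := fun h => h2 (by linarith [sub_eq_zero.mp h])
    simp_rw [pow_mul]
    rw [geom_sum_eq hne]
    rw [← pow_mul]
    field_simp
    ring
  · intro hL1
    subst hL1
    simp [mul_comm]
end
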